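/- Fix 0 ≤ p ≤ K and l ∈ {1,…,n}; let c be the l-th column of C_p, assume c is nonzero and sign-coherent with common sign ε, and set c^+ := ε·c. Assume each h'_i := (e_i, d_l·c)_{D_0R} is an integer, and assume the duality (g_{i;p}, d_l·c)_{D_0R} = δ_{il} for all i (g_{i;p} the i-th column of G_p). Let ρ : F → F be a ring homomorphism fixing ℚ and every y_i and z_{i,s}, with ρ(x_i) = x_i for i ≠ l and ρ(x_l) = x_l·(∑_{s=0}^{r_l} z_{l,s}·Ŷ^{ε·s})^{-1}, where Ŷ := (∏_{m=1}^n y_m^{c_{ml;p}})·(∏_{m=1}^n x_m^{b_{ml;p}}); and let q : F → F be a ring homomorphism fixing ℚ and every y_i and z_{i,s}, with q(x_i) = x_i·(∑_{s=0}^{r_l} z_{l,s}·(ŷ^{c^+})^s)^{−h'_i} for all i. Then τ^{(p)} ∘ ρ = q ∘ τ^{(p)} as maps F → F. -/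

import Mathlib

noncomputable section

/-- Variables of the ambient field of a generalized cluster algebra of rank `n` with
mutation degrees `r`: cluster variables `x_i`, coefficients `y_i`, and `z_{i,s}` for
`1 ≤ s ≤ r_i - 1` (encoded by `Fin (r i - 1)`, the variable `z i t` standing for
`z_{i, t+1}`). -/
inductive GVar (n : ℕ) (r : Fin n → ℕ) : Type where
  | x : Fin n → GVar n r
  | y : Fin n → GVar n r
  | z : (i : Fin n) → Fin (r i - 1) → GVar n r

/-- The ambient field: rational functions over `ℚ` in the variables `GVar n r`. -/
abbrev GF (n : ℕ) (r : Fin n → ℕ) : Type := FractionRing (MvPolynomial (GVar n r) ℚ)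

/-- The variable `x_i` as an element of the field `GF n r`. -/
def Xv {n : ℕ} {r : Fin n → ℕ} (i : Fin n) : GF n r :=
  algebraMap (MvPolynomial (GVar n r) ℚ) (GF n r) (MvPolynomial.X (GVar.x i))

/-- The variable `y_i` as an element of the field `GF n r`. -/
def Yv {n : ℕ} {r : Fin n → ℕ} (i : Fin n) : GF n r :=
  algebraMap (MvPolynomial (GVar n r) ℚ) (GF n r) (MvPolynomial.X (GVar.y i))

/-- The variable `z_{i,s+1}` (for `s : Fin (r i - 1)`) as an element of `GF n r`. -/
def Zv {n : ℕ} {r : Fin n → ℕ} (i : Fin n) (s : Fin (r i - 1)) : GF n r :=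
  algebraMap (MvPolynomial (GVar n r) ℚ) (GF n r) (MvPolynomial.X (GVar.z i s))

/-- A rational constant as an element of `GF n r`. -/
def Qc {n : ℕ} {r : Fin n → ℕ} (a : ℚ) : GF n r :=
  algebraMap (MvPolynomial (GVar n r) ℚ) (GF n r) (MvPolynomial.C a)

/-- `z_{i,s}` for `0 ≤ s ≤ r i`, with the convention `z_{i,0} = z_{i,r_i} = 1`. -/
def Zc {n : ℕ} (r : Fin n → ℕ) (i : Fin n) (s : ℕ) : GF n r :=
  if h : 0 < s ∧ s < r i then Zv i ⟨s - 1, by omega⟩ else 1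

/-- `x^v = ∏ x_i^{v_i}` for `v ∈ ℤ^n`. -/
def xpow {n : ℕ} (r : Fin n → ℕ) (v : Fin n → ℤ) : GF n r :=
  ∏ i, Xv (r := r) i ^ v i

/-- `ŷ_i = y_i·∏_j x_j^{b_{ji}}`. -/
def yhat {n : ℕ} (r : Fin n → ℕ) (B : Matrix (Fin n) (Fin n) ℤ) (i : Fin n) : GF n r :=
  Yv i * ∏ j, Xv (r := r) j ^ B j i

/-- `ŷ^v = ∏ ŷ_i^{v_i}` for `v ∈ ℤ^n`. -/
def yhatpow {n : ℕ} (r : Fin n → ℕ) (B : Matrix (Fin n) (Fin n) ℤ) (v : Fin n → ℤ) :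
    GF n r :=
  ∏ i, yhat r B i ^ v i

private lemma max_mul_right (a c : ℤ) (hc : 0 ≤ c) : max (a * c) 0 = c * max a 0 := by
  rw [mul_max_of_nonneg _ _ hc, mul_zero, mul_comm]

private lemma max_add_eq (x : ℤ) : max x 0 = max (-x) 0 + x := by
  rcases le_total x 0 with h | h
  · rw [max_eq_right h, max_eq_left (neg_nonneg.mpr h)]; ring
  · rw [max_eq_left h, max_eq_right (neg_nonpos.mpr h)]; ring

private lemma zpow_sum_eq {F : Type*} [Field F] (x : F) (hx : x ≠ 0) {ι : Type*}
    (s : Finset ι) (f : ι → ℤ) : x ^ (∑ i ∈ s, f i) = ∏ i ∈ s, x ^ f i := by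
  classical
  induction s using Finset.induction with
  | empty => simp
  | @insert a s h ih => rw [Finset.sum_insert h, Finset.prod_insert h, zpow_add₀ hx, ih]

private lemma prod_zpow' {F : Type*} [Field F] {ι : Type*} (s : Finset ι) (f : ι → F)
    (e : ℤ) : (∏ i ∈ s, f i) ^ e = ∏ i ∈ s, f i ^ e := by
  classical
  induction s using Finset.induction with
  | empty => simp
  | @insert a s h ih => rw [Finset.prod_insert h, Finset.prod_insert h, mul_zpow, ih]

private lemma Xv_ne_zero {n : ℕ} {r : Fin n → ℕ} (i : Fin n) : (Xv (r := r) i) ≠ 0 :=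
  fun h => MvPolynomial.X_ne_zero (GVar.x i)
    (IsFractionRing.injective (MvPolynomial (GVar n r) ℚ) (GF n r)
      (h.trans (map_zero _).symm))

private lemma Yv_ne_zero {n : ℕ} {r : Fin n → ℕ} (i : Fin n) : (Yv (r := r) i) ≠ 0 :=
  fun h => MvPolynomial.X_ne_zero (GVar.y i)
    (IsFractionRing.injective (MvPolynomial (GVar n r) ℚ) (GF n r)
      (h.trans (map_zero _).symm))

private lemma xpow_mul_xpow {n : ℕ} (r : Fin n → ℕ) (v w : Fin n → ℤ) :
    xpow r v * xpow r w = xpow r (fun i => v i + w i) := by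
  unfold xpow
  rw [← Finset.prod_mul_distrib]
  exact Finset.prod_congr rfl fun i _ => (zpow_add₀ (Xv_ne_zero i) _ _).symm

private lemma xpow_inv {n : ℕ} (r : Fin n → ℕ) (v : Fin n → ℤ) :
    (xpow r v)⁻¹ = xpow r (fun i => -(v i)) := by
  unfold xpow
  rw [← Finset.prod_inv_distrib]
  exact Finset.prod_congr rfl fun i _ => (zpow_neg _ _).symm

private lemma xpow_zpow {n : ℕ} (r : Fin n → ℕ) (v : Fin n → ℤ) (e : ℤ) :
    xpow r v ^ e = xpow r (fun i => v i * e) := by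
  unfold xpow
  rw [prod_zpow']
  exact Finset.prod_congr rfl fun i _ => (zpow_mul _ _ _).symm

private lemma prod_xpow {n : ℕ} (r : Fin n → ℕ) (v : Fin n → Fin n → ℤ) :
    ∏ l, xpow r (v l) = xpow r (fun m => ∑ l, v l m) := by
  unfold xpow
  rw [Finset.prod_comm]
  exact Finset.prod_congr rfl fun m _ => (zpow_sum_eq _ (Xv_ne_zero m) _ _).symm

private lemma yhatpow_eq {n : ℕ} (r : Fin n → ℕ) (Bm : Matrix (Fin n) (Fin n) ℤ)
    (v : Fin n → ℤ) :
    yhatpow r Bm v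
      = (∏ m, Yv (r := r) m ^ v m) * xpow r (fun j => ∑ m, Bm j m * v m) := by
  unfold yhatpow yhat xpow
  have h1 : ∀ m : Fin n, (Yv (r := r) m * ∏ j, Xv (r := r) j ^ Bm j m) ^ v m
      = Yv (r := r) m ^ v m * ∏ j, Xv (r := r) j ^ (Bm j m * v m) := by
    intro m
    rw [mul_zpow, prod_zpow']
    congr 1
    exact Finset.prod_congr rfl fun j _ => (zpow_mul _ _ _).symm
  calc (∏ m, (Yv (r := r) m * ∏ j, Xv (r := r) j ^ Bm j m) ^ v m)
      = ∏ m, (Yv (r := r) m ^ v m * ∏ j, Xv (r := r) j ^ (Bm j m * v m)) :=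
        Finset.prod_congr rfl fun m _ => h1 m
    _ = (∏ m, Yv (r := r) m ^ v m) * ∏ m, ∏ j, Xv (r := r) j ^ (Bm j m * v m) :=
        Finset.prod_mul_distrib
    _ = (∏ m, Yv (r := r) m ^ v m) * ∏ j, ∏ m, Xv (r := r) j ^ (Bm j m * v m) := by
        rw [Finset.prod_comm]
    _ = (∏ m, Yv (r := r) m ^ v m) * ∏ j, Xv (r := r) j ^ (∑ m, Bm j m * v m) := by
        congr 1
        exact Finset.prod_congr rfl fun j _ => (zpow_sum_eq _ (Xv_ne_zero j) _ _).symm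

private lemma yhatpow_zpow {n : ℕ} (r : Fin n → ℕ) (Bm : Matrix (Fin n) (Fin n) ℤ)
    (v : Fin n → ℤ) (e : ℤ) :
    yhatpow r Bm v ^ e = yhatpow r Bm (fun m => v m * e) := by
  unfold yhatpow
  rw [prod_zpow']
  exact Finset.prod_congr rfl fun i _ => (zpow_mul _ _ _).symm

set_option maxHeartbeats 2000000 in
/-- Fix `0 ≤ p ≤ K` and `l ∈ [1,n]`; let `c` be the `l`-th column
of `C_p`, nonzero and sign-coherent with common sign `ε_l`, and assume each
`h'_i = (e_i, d_l·c)_{D₀R}` is an integer and the duality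
`(g_{i;p}, d_l·c)_{D₀R} = δ_{il}`. With `ρ` the automorphism sending `x_l` to
`x_l·(∑_s z_{l,s}·Ŷ^{ε_l s})⁻¹` (fixing the other generators), where
`Ŷ = ∏ y_m^{c_{ml;p}}·∏ x_m^{b_{ml;p}}`, and `q` the automorphism sending each `x_i`
to `x_i·(∑_s z_{l,s}·(ŷ^{c⁺})^s)^{-h'_i}`, one has `τ^{(p)} ∘ ρ = q ∘ τ^{(p)}`. -/
theorem stmt_9 (n K : ℕ) (hn : 1 ≤ n) (r : Fin n → ℕ) (hr : ∀ i, 0 < r i)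
    (B₀ : Matrix (Fin n) (Fin n) ℤ)
    (D₀ : Fin n → ℤ) (hD₀ : ∀ i, 0 < D₀ i)
    (hskew : ∀ i j, D₀ i * (r i : ℤ) * B₀ i j = -(D₀ j * (r j : ℤ) * B₀ j i))
    (idx : ℕ → Fin n) (ε : ℕ → ℤ)
    (hε : ∀ j < K, ε (j + 1) = 1 ∨ ε (j + 1) = -1)
    (B C G : ℕ → Matrix (Fin n) (Fin n) ℤ)
    (hB0 : B 0 = B₀) (hC0 : C 0 = 1) (hG0 : G 0 = 1)
    -- at each step the c-vector is nonzero and sign-coherent with common sign ε_j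
    (hcv : ∀ j < K, (∃ l, C j l (idx (j + 1)) ≠ 0) ∧
      ∀ l, 0 ≤ ε (j + 1) * C j l (idx (j + 1)))
    (hB : ∀ j < K, ∀ (a b : Fin n),
      B (j + 1) a b =
        if a = idx (j + 1) ∨ b = idx (j + 1) then -(B j a b)
        else B j a b + (r (idx (j + 1)) : ℤ) *
          (max (-(B j a (idx (j + 1)))) 0 * B j (idx (j + 1)) b
            + B j a (idx (j + 1)) * max (B j (idx (j + 1)) b) 0))
    (hC : ∀ j < K, ∀ (a b : Fin n),
      C (j + 1) a b =
        if b = idx (j + 1) then -(C j a b)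
        else C j a b + (r (idx (j + 1)) : ℤ) *
          (C j a (idx (j + 1)) * max (ε (j + 1) * B j (idx (j + 1)) b) 0
            + max (-(ε (j + 1) * C j a (idx (j + 1)))) 0 * B j (idx (j + 1)) b))
    (hG : ∀ j < K, ∀ (l i : Fin n),
      G (j + 1) l i =
        if i = idx (j + 1) then
          -(G j l i) + (r (idx (j + 1)) : ℤ) *
            ∑ p, max (-(ε (j + 1) * B j p (idx (j + 1)))) 0 * G j l p
        else G j l i)
    (τ : ℕ → (GF n r →+* GF n r))
    (hτ0 : ∀ j < K, ∀ a : ℚ, τ (j + 1) (Qc a) = Qc a)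
    (hτy : ∀ j < K, ∀ i, τ (j + 1) (Yv i) = Yv i)
    (hτz : ∀ j < K, ∀ i s, τ (j + 1) (Zv i s) = Zv i s)
    (hτx : ∀ j < K, ∀ i, i ≠ idx (j + 1) → τ (j + 1) (Xv i) = Xv i)
    (hτxk : ∀ j < K, τ (j + 1) (Xv (idx (j + 1))) =
      (Xv (idx (j + 1)) : GF n r)⁻¹ *
        ∏ l, Xv l ^ max (-(ε (j + 1) * B j l (idx (j + 1)) * (r (idx (j + 1)) : ℤ))) 0)
    (T : ℕ → (GF n r →+* GF n r))
    (hT0 : T 0 = RingHom.id _)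
    (hT : ∀ j < K, T (j + 1) = (T j).comp (τ (j + 1)))
    -- the fixed step `p` and direction `l`
    (p : ℕ) (hp : p ≤ K) (l : Fin n)
    (hcl : ∃ i, C p i l ≠ 0) (εl : ℤ) (hεl : εl = 1 ∨ εl = -1)
    (hscl : ∀ i, 0 ≤ εl * C p i l)
    (h' : Fin n → ℤ)
    (hh' : ∀ i, h' i * (D₀ l * (r l : ℤ)) = D₀ i * (r i : ℤ) * C p i l)
    (hdual : ∀ i, ∑ m, G p m i * (D₀ m * (r m : ℤ)) * C p m l =
      if i = l then D₀ l * (r l : ℤ) else 0)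
    (ρ q : GF n r →+* GF n r)
    (hρ0 : ∀ a : ℚ, ρ (Qc a) = Qc a)
    (hρy : ∀ i, ρ (Yv i) = Yv i)
    (hρz : ∀ i s, ρ (Zv i s) = Zv i s)
    (hρx : ∀ i, i ≠ l → ρ (Xv i) = Xv i)
    (hρl : ρ (Xv l) = Xv l *
      (∑ s ∈ Finset.range (r l + 1),
        Zc r l s *
          ((∏ m, Yv (r := r) m ^ C p m l) * ∏ m, Xv (r := r) m ^ B p m l) ^ (εl * s))⁻¹)
    (hq0 : ∀ a : ℚ, q (Qc a) = Qc a)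
    (hqy : ∀ i, q (Yv i) = Yv i)
    (hqz : ∀ i s, q (Zv i s) = Zv i s)
    (hqx : ∀ i, q (Xv i) =
      Xv i * (∑ s ∈ Finset.range (r l + 1),
        Zc r l s * yhatpow r B₀ (fun m => εl * C p m l) ^ s) ^ (-(h' i))) :
    ∀ f, T p (ρ f) = q (T p f) := by
  classical
  -- positivity of the symmetrizers
  have hdpos : ∀ i : Fin n, (0 : ℤ) < D₀ i * (r i : ℤ) := fun i =>
    mul_pos (hD₀ i) (by exact_mod_cast hr i)
  have hdne : ∀ i : Fin n, (D₀ i * (r i : ℤ)) ≠ 0 := fun i => (hdpos i).ne'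
  -- Lemma A : skew-symmetrizability is preserved
  have hskewj : ∀ j, j ≤ K → ∀ a b : Fin n,
      D₀ a * (r a : ℤ) * B j a b = -(D₀ b * (r b : ℤ) * B j b a) := by
    intro j
    induction j with
    | zero => intro _ a b; rw [hB0]; exact hskew a b
    | succ j ih =>
      intro hjK a b
      have hj : j < K := by omega
      have IH := ih (by omega)
      have hBkk : B j (idx (j + 1)) (idx (j + 1)) = 0 := by
        have h := IH (idx (j + 1)) (idx (j + 1))
        have h2 : D₀ (idx (j + 1)) * (r (idx (j + 1)) : ℤ) * B j (idx (j + 1)) (idx (j + 1)) = 0 := by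
          linarith
        rcases mul_eq_zero.mp h2 with h3 | h3
        · exact absurd h3 (hdne (idx (j + 1)))
        · exact h3
      rw [hB j hj a b, hB j hj b a]
      by_cases hcase : a = idx (j + 1) ∨ b = idx (j + 1)
      · rw [if_pos hcase, if_pos hcase.symm]
        have h1 := IH a b
        linarith
      · push_neg at hcase
        rw [if_neg (by tauto), if_neg (by tauto)]
        have h1 := IH a b
        have h2 := IH a (idx (j + 1))
        have h5 := IH b (idx (j + 1))
        have hk1 : D₀ a * (r a : ℤ) * max (-(B j a (idx (j + 1)))) 0
            = D₀ (idx (j + 1)) * (r (idx (j + 1)) : ℤ) * max (B j (idx (j + 1)) a) 0 := by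
          have hx : D₀ a * (r a : ℤ) * (-(B j a (idx (j + 1))))
              = D₀ (idx (j + 1)) * (r (idx (j + 1)) : ℤ) * (B j (idx (j + 1)) a) := by
            linarith
          rw [mul_max_of_nonneg _ _ (le_of_lt (hdpos a)),
            mul_max_of_nonneg _ _ (le_of_lt (hdpos (idx (j + 1)))), mul_zero, mul_zero, hx]
        have hk4 : D₀ b * (r b : ℤ) * max (-(B j b (idx (j + 1)))) 0
            = D₀ (idx (j + 1)) * (r (idx (j + 1)) : ℤ) * max (B j (idx (j + 1)) b) 0 := by
          have hx : D₀ b * (r b : ℤ) * (-(B j b (idx (j + 1))))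
              = D₀ (idx (j + 1)) * (r (idx (j + 1)) : ℤ) * (B j (idx (j + 1)) b) := by
            linarith
          rw [mul_max_of_nonneg _ _ (le_of_lt (hdpos b)),
            mul_max_of_nonneg _ _ (le_of_lt (hdpos (idx (j + 1)))), mul_zero, mul_zero, hx]
        have key : (D₀ (idx (j + 1)) * (r (idx (j + 1)) : ℤ)) *
            (D₀ a * (r a : ℤ) * (B j a b + (r (idx (j + 1)) : ℤ) *
              (max (-(B j a (idx (j + 1)))) 0 * B j (idx (j + 1)) b
                + B j a (idx (j + 1)) * max (B j (idx (j + 1)) b) 0)))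
            = (D₀ (idx (j + 1)) * (r (idx (j + 1)) : ℤ)) *
              (-(D₀ b * (r b : ℤ) * (B j b a + (r (idx (j + 1)) : ℤ) *
                (max (-(B j b (idx (j + 1)))) 0 * B j (idx (j + 1)) a
                  + B j b (idx (j + 1)) * max (B j (idx (j + 1)) a) 0)))) := by
          linear_combination (D₀ (idx (j + 1)) * (r (idx (j + 1)) : ℤ)) * h1
            + (r (idx (j + 1)) : ℤ) * (D₀ (idx (j + 1)) * (r (idx (j + 1)) : ℤ)) * B j (idx (j + 1)) b * hk1
            + (r (idx (j + 1)) : ℤ) * (D₀ (idx (j + 1)) * (r (idx (j + 1)) : ℤ)) * max (B j (idx (j + 1)) a) 0 * h5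
            + (r (idx (j + 1)) : ℤ) * (D₀ (idx (j + 1)) * (r (idx (j + 1)) : ℤ)) * max (B j (idx (j + 1)) b) 0 * h2
            + (r (idx (j + 1)) : ℤ) * (D₀ (idx (j + 1)) * (r (idx (j + 1)) : ℤ)) * B j (idx (j + 1)) a * hk4
        exact mul_left_cancel₀ (hdne (idx (j + 1))) key
  -- Lemma B : G_j B_j = B₀ C_j
  have hGB : ∀ j, j ≤ K → ∀ a b : Fin n,
      ∑ m, G j a m * B j m b = ∑ m, B₀ a m * C j m b := by
    intro j
    induction j with
    | zero =>
      intro _ a b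
      simp only [hB0, hC0, hG0]
      rw [Finset.sum_eq_single a
          (fun m _ hm => by rw [Matrix.one_apply_ne' hm, zero_mul])
          (fun h => absurd (Finset.mem_univ a) h),
        Finset.sum_eq_single b
          (fun m _ hm => by rw [Matrix.one_apply_ne hm, mul_zero])
          (fun h => absurd (Finset.mem_univ b) h),
        Matrix.one_apply_eq, Matrix.one_apply_eq, one_mul, mul_one]
    | succ j ih =>
      intro hjK a b
      have hj : j < K := by omega
      have IH := ih (by omega)
      have hBkk : B j (idx (j + 1)) (idx (j + 1)) = 0 := by
        have h := hskewj j (by omega) (idx (j + 1)) (idx (j + 1))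
        have h2 : D₀ (idx (j + 1)) * (r (idx (j + 1)) : ℤ) * B j (idx (j + 1)) (idx (j + 1)) = 0 := by
          linarith
        rcases mul_eq_zero.mp h2 with h3 | h3
        · exact absurd h3 (hdne (idx (j + 1)))
        · exact h3
      have hsc : ∀ m : Fin n, max (-(ε (j + 1) * C j m (idx (j + 1)))) 0 = 0 := fun m =>
        max_eq_right (neg_nonpos.mpr ((hcv j hj).2 m))
      by_cases hb : b = idx (j + 1)
      · have hBs : ∀ m, B (j + 1) m b = -(B j m b) := fun m => by
          rw [hB j hj, if_pos (Or.inr hb)]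
        have hCs : ∀ m, C (j + 1) m b = -(C j m b) := fun m => by
          rw [hC j hj, if_pos hb]
        have hL : ∀ m, G (j + 1) a m * B (j + 1) m b = G j a m * (-(B j m b)) := by
          intro m
          rw [hBs m]
          by_cases hm : m = idx (j + 1)
          · rw [hG j hj a m, if_pos hm]
            have hmb : B j m b = 0 := by rw [hm, hb]; exact hBkk
            rw [hmb]
            ring
          · rw [hG j hj a m, if_neg hm]
        rw [Finset.sum_congr rfl fun m _ => hL m,
          Finset.sum_congr rfl fun (m : Fin n) _ =>
            (show G j a m * (-(B j m b)) = -(G j a m * B j m b) by ring),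
          Finset.sum_neg_distrib, IH a b, ← Finset.sum_neg_distrib]
        exact Finset.sum_congr rfl fun m _ => by rw [hCs m]; ring
      · -- b ≠ idx (j+1)
        have hBkb : ∀ m : Fin n, B (j + 1) m b
            = if m = idx (j + 1) then -(B j m b)
              else B j m b + (r (idx (j + 1)) : ℤ) *
                (max (-(B j m (idx (j + 1)))) 0 * B j (idx (j + 1)) b
                  + B j m (idx (j + 1)) * max (B j (idx (j + 1)) b) 0) := by
          intro m
          rw [hB j hj m b]
          by_cases hm : m = idx (j + 1)
          · rw [if_pos (Or.inl hm), if_pos hm]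
          · rw [if_neg (by tauto), if_neg hm]
        have hCb : ∀ m : Fin n, C (j + 1) m b
            = C j m b + (r (idx (j + 1)) : ℤ) *
                (C j m (idx (j + 1)) * max (ε (j + 1) * B j (idx (j + 1)) b) 0) := by
          intro m
          rw [hC j hj m b, if_neg hb, hsc m]
          ring
        have hsplit : ∀ m : Fin n, G (j + 1) a m * B (j + 1) m b
            = G j a m * (B j m b + (r (idx (j + 1)) : ℤ) *
                (max (-(B j m (idx (j + 1)))) 0 * B j (idx (j + 1)) b
                  + B j m (idx (j + 1)) * max (B j (idx (j + 1)) b) 0))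
              + (if m = idx (j + 1) then
                  -((r (idx (j + 1)) : ℤ) *
                    (∑ pp, max (-(ε (j + 1) * B j pp (idx (j + 1)))) 0 * G j a pp)
                      * B j (idx (j + 1)) b)
                else 0) := by
          intro m
          by_cases hm : m = idx (j + 1)
          · rw [hm, if_pos rfl, hBkb (idx (j + 1)), if_pos rfl, hG j hj a (idx (j + 1)),
              if_pos rfl, hBkk]
            simp only [neg_zero, max_self, zero_mul, mul_zero, add_zero]
            ring
          · rw [hBkb m, if_neg hm, hG j hj a m]
            simp only [if_neg hm, add_zero]
        have hite : (∑ m : Fin n, (if m = idx (j + 1) then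
              -((r (idx (j + 1)) : ℤ) *
                (∑ pp, max (-(ε (j + 1) * B j pp (idx (j + 1)))) 0 * G j a pp)
                  * B j (idx (j + 1)) b)
            else 0))
            = -((r (idx (j + 1)) : ℤ) *
                (∑ m, max (-(ε (j + 1) * B j m (idx (j + 1)))) 0 * G j a m)
                  * B j (idx (j + 1)) b) := by
          simp
        have hexp : ∑ m, G j a m * (B j m b + (r (idx (j + 1)) : ℤ) *
              (max (-(B j m (idx (j + 1)))) 0 * B j (idx (j + 1)) b
                + B j m (idx (j + 1)) * max (B j (idx (j + 1)) b) 0))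
            = (∑ m, G j a m * B j m b)
              + (r (idx (j + 1)) : ℤ) * B j (idx (j + 1)) b *
                  (∑ m, G j a m * max (-(B j m (idx (j + 1)))) 0)
              + (r (idx (j + 1)) : ℤ) * max (B j (idx (j + 1)) b) 0 *
                  (∑ m, G j a m * B j m (idx (j + 1))) := by
          rw [Finset.mul_sum, Finset.mul_sum, ← Finset.sum_add_distrib,
            ← Finset.sum_add_distrib]
          exact Finset.sum_congr rfl fun m _ => by ring
        have L1 : ∑ m, G (j + 1) a m * B (j + 1) m b
            = (∑ m, G j a m * B j m b)
              + (r (idx (j + 1)) : ℤ) * B j (idx (j + 1)) b *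
                  (∑ m, G j a m * max (-(B j m (idx (j + 1)))) 0)
              + (r (idx (j + 1)) : ℤ) * max (B j (idx (j + 1)) b) 0 *
                  (∑ m, G j a m * B j m (idx (j + 1)))
              - (r (idx (j + 1)) : ℤ) *
                  (∑ m, max (-(ε (j + 1) * B j m (idx (j + 1)))) 0 * G j a m)
                  * B j (idx (j + 1)) b := by
          rw [Finset.sum_congr rfl fun m _ => hsplit m, Finset.sum_add_distrib, hite, hexp]
          ring
        have R1 : ∑ m, B₀ a m * C (j + 1) m b
            = (∑ m, B₀ a m * C j m b)
              + (r (idx (j + 1)) : ℤ) * max (ε (j + 1) * B j (idx (j + 1)) b) 0 *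
                  (∑ m, B₀ a m * C j m (idx (j + 1))) := by
          rw [Finset.mul_sum, ← Finset.sum_add_distrib]
          exact Finset.sum_congr rfl fun m _ => by rw [hCb m]; ring
        rw [L1, R1]
        rcases hε j hj with he | he
        · simp only [he, one_mul]
          have hcomm : (∑ m, G j a m * max (-(B j m (idx (j + 1)))) 0)
              = ∑ m, max (-(B j m (idx (j + 1)))) 0 * G j a m :=
            Finset.sum_congr rfl fun m _ => mul_comm _ _
          linear_combination (IH a b)
            + (r (idx (j + 1)) : ℤ) * max (B j (idx (j + 1)) b) 0 * (IH a (idx (j + 1)))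
            + (r (idx (j + 1)) : ℤ) * (B j (idx (j + 1)) b) * hcomm
        · simp only [he, neg_mul, one_mul, neg_neg]
          have hdiff : (∑ m, G j a m * max (-(B j m (idx (j + 1)))) 0)
              - (∑ m, max (B j m (idx (j + 1))) 0 * G j a m)
              = -(∑ m, G j a m * B j m (idx (j + 1))) := by
            rw [← Finset.sum_sub_distrib, ← Finset.sum_neg_distrib]
            refine Finset.sum_congr rfl fun m _ => ?_
            linear_combination (-(G j a m)) * (max_add_eq (B j m (idx (j + 1))))
          have hsub := max_add_eq (B j (idx (j + 1)) b)
          linear_combination (IH a b)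
            + (r (idx (j + 1)) : ℤ) * (B j (idx (j + 1)) b) * hdiff
            + (r (idx (j + 1)) : ℤ) * (∑ m, G j a m * B j m (idx (j + 1))) * hsub
            + (r (idx (j + 1)) : ℤ) * max (-(B j (idx (j + 1)) b)) 0 * (IH a (idx (j + 1)))
  -- Lemma C : action of T j on generators
  have hTQ : ∀ j, j ≤ K → ∀ a : ℚ, T j (Qc a) = Qc a := by
    intro j
    induction j with
    | zero => intro _ a; rw [hT0]; rfl
    | succ j ih =>
      intro hjK a
      have hj : j < K := by omega
      rw [hT j hj, RingHom.comp_apply, hτ0 j hj, ih (by omega)]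
  have hTY : ∀ j, j ≤ K → ∀ i, T j (Yv (r := r) i) = Yv i := by
    intro j
    induction j with
    | zero => intro _ i; rw [hT0]; rfl
    | succ j ih =>
      intro hjK i
      have hj : j < K := by omega
      rw [hT j hj, RingHom.comp_apply, hτy j hj, ih (by omega)]
  have hTZ : ∀ j, j ≤ K → ∀ i s, T j (Zv (r := r) i s) = Zv i s := by
    intro j
    induction j with
    | zero => intro _ i s; rw [hT0]; rfl
    | succ j ih =>
      intro hjK i s
      have hj : j < K := by omega
      rw [hT j hj, RingHom.comp_apply, hτz j hj, ih (by omega)]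
  have hTX : ∀ j, j ≤ K → ∀ i, T j (Xv (r := r) i) = xpow r (fun m => G j m i) := by
    intro j
    induction j with
    | zero =>
      intro _ i
      rw [hT0]
      simp only [RingHom.id_apply]
      unfold xpow
      rw [Finset.prod_eq_single i
          (fun m _ hm => by
            show Xv (r := r) m ^ G 0 m i = 1
            rw [hG0, Matrix.one_apply_ne hm, zpow_zero])
          (fun h => absurd (Finset.mem_univ i) h)]
      show Xv (r := r) i = Xv (r := r) i ^ G 0 i i
      rw [hG0, Matrix.one_apply_eq, zpow_one]
    | succ j ih =>
      intro hjK i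
      have hj : j < K := by omega
      have ihle := ih (by omega)
      rw [hT j hj, RingHom.comp_apply]
      by_cases hik : i = idx (j + 1)
      · rw [hik, hτxk j hj, map_mul, map_inv₀, map_prod, ihle (idx (j + 1))]
        have hfac : ∀ l' : Fin n,
            T j (Xv (r := r) l' ^
              max (-(ε (j + 1) * B j l' (idx (j + 1)) * (r (idx (j + 1)) : ℤ))) 0)
            = xpow r (fun m => G j m l' *
                ((r (idx (j + 1)) : ℤ) * max (-(ε (j + 1) * B j l' (idx (j + 1)))) 0)) := by
          intro l'
          rw [map_zpow₀, ihle l', xpow_zpow]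
          congr 1
          funext m
          have h1 : -(ε (j + 1) * B j l' (idx (j + 1)) * ((r (idx (j + 1)) : ℤ)))
              = (-(ε (j + 1) * B j l' (idx (j + 1)))) * (r (idx (j + 1)) : ℤ) := by ring
          rw [h1, max_mul_right _ _ (Int.natCast_nonneg _)]
        rw [Finset.prod_congr rfl fun l' _ => hfac l', prod_xpow, xpow_inv, xpow_mul_xpow]
        congr 1
        funext m
        rw [hG j hj m (idx (j + 1)), if_pos rfl, Finset.mul_sum]
        congr 1
        exact Finset.sum_congr rfl fun l' _ => by ring
      · rw [hτx j hj i hik, ihle i]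
        congr 1
        funext m
        rw [hG j hj m i, if_neg hik]
  -- specializations at step p
  have hTQp := hTQ p hp
  have hTYp := hTY p hp
  have hTZp := hTZ p hp
  have hTXp := hTX p hp
  have hGBp := hGB p hp
  have hTZcp : ∀ s, T p (Zc r l s) = Zc r l s := by
    intro s
    unfold Zc
    split
    · exact hTZp l _
    · exact map_one _
  -- the key monomial computation
  have hYl : T p ((∏ m, Yv (r := r) m ^ C p m l) * ∏ m, Xv (r := r) m ^ B p m l)
      = yhatpow r B₀ (fun m => C p m l) := by
    rw [map_mul, map_prod, map_prod]
    have h1 : ∀ m : Fin n, T p (Yv (r := r) m ^ C p m l) = Yv (r := r) m ^ C p m l :=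
      fun m => by rw [map_zpow₀, hTYp]
    have h2 : ∀ m : Fin n, T p (Xv (r := r) m ^ B p m l)
        = xpow r (fun a => G p a m * B p m l) := fun m => by
      rw [map_zpow₀, hTXp, xpow_zpow]
    rw [Finset.prod_congr rfl fun m _ => h1 m, Finset.prod_congr rfl fun m _ => h2 m,
      prod_xpow, yhatpow_eq]
    exact congrArg (fun t => (∏ m, Yv (r := r) m ^ C p m l) * t)
      (congrArg (xpow r) (funext fun a => hGBp a l))
  -- T p maps the ρ-denominator to the q-denominator
  have hTS : T p (∑ s ∈ Finset.range (r l + 1),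
        Zc r l s *
          ((∏ m, Yv (r := r) m ^ C p m l) * ∏ m, Xv (r := r) m ^ B p m l) ^ (εl * (s : ℤ)))
      = ∑ s ∈ Finset.range (r l + 1),
          Zc r l s * yhatpow r B₀ (fun m => εl * C p m l) ^ s := by
    rw [map_sum]
    refine Finset.sum_congr rfl fun s _ => ?_
    rw [map_mul, hTZcp, map_zpow₀, hYl]
    congr 1
    have h3 : yhatpow r B₀ (fun m => εl * C p m l)
        = yhatpow r B₀ (fun m => C p m l) ^ εl := by
      rw [yhatpow_zpow]
      congr 1
      funext m
      ring
    rw [h3, ← zpow_natCast (yhatpow r B₀ (fun m => C p m l) ^ εl) s, ← zpow_mul]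
  -- nonvanishing of the denominators
  have hSne : (∑ s ∈ Finset.range (r l + 1),
        Zc r l s *
          ((∏ m, Yv (r := r) m ^ C p m l) * ∏ m, Xv (r := r) m ^ B p m l) ^ (εl * (s : ℤ)))
      ≠ 0 := by
    intro h0
    have h1 := hρl
    rw [h0, inv_zero, mul_zero] at h1
    exact Xv_ne_zero l (RingHom.injective ρ (h1.trans (map_zero ρ).symm))
  have hPne : (∑ s ∈ Finset.range (r l + 1),
        Zc r l s * yhatpow r B₀ (fun m => εl * C p m l) ^ s) ≠ 0 := by
    rw [← hTS]
    intro h0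
    exact hSne (RingHom.injective (T p) (h0.trans (map_zero (T p)).symm))
  -- the exponent computation
  have Hsum : ∀ i : Fin n, (∑ m, h' m * G p m i) = if i = l then 1 else 0 := by
    intro i
    have hmul : (∑ m, h' m * G p m i) * (D₀ l * (r l : ℤ))
        = (if i = l then 1 else 0) * (D₀ l * (r l : ℤ)) := by
      rw [Finset.sum_mul]
      have h4 : ∀ m : Fin n, h' m * G p m i * (D₀ l * (r l : ℤ))
          = G p m i * (D₀ m * (r m : ℤ)) * C p m l := by
        intro m
        linear_combination (G p m i) * hh' m
      rw [Finset.sum_congr rfl fun m _ => h4 m, hdual i]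
      split <;> ring
    exact mul_right_cancel₀ (hdne l) hmul
  -- q on x-monomials
  have hq_xpow : ∀ v : Fin n → ℤ, q (xpow r v)
      = xpow r v * (∑ s ∈ Finset.range (r l + 1),
          Zc r l s * yhatpow r B₀ (fun m => εl * C p m l) ^ s) ^ (-(∑ m, h' m * v m)) := by
    intro v
    unfold xpow
    rw [map_prod]
    have h1 : ∀ m : Fin n, q (Xv (r := r) m ^ v m)
        = Xv (r := r) m ^ v m * (∑ s ∈ Finset.range (r l + 1),
            Zc r l s * yhatpow r B₀ (fun m => εl * C p m l) ^ s) ^ (-(h' m) * v m) := by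
      intro m
      rw [map_zpow₀, hqx m, mul_zpow, ← zpow_mul]
    rw [Finset.prod_congr rfl fun m _ => h1 m, Finset.prod_mul_distrib]
    congr 1
    calc (∏ m, (∑ s ∈ Finset.range (r l + 1),
            Zc r l s * yhatpow r B₀ (fun m => εl * C p m l) ^ s) ^ (-(h' m) * v m))
        = (∑ s ∈ Finset.range (r l + 1),
            Zc r l s * yhatpow r B₀ (fun m => εl * C p m l) ^ s) ^ (∑ m, -(h' m) * v m) :=
          (zpow_sum_eq _ hPne _ _).symm
      _ = (∑ s ∈ Finset.range (r l + 1),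
            Zc r l s * yhatpow r B₀ (fun m => εl * C p m l) ^ s) ^ (-(∑ m, h' m * v m)) := by
          congr 1
          rw [← Finset.sum_neg_distrib]
          exact Finset.sum_congr rfl fun m _ => by ring
  -- reduce to generators
  intro f
  have main : (T p).comp ρ = q.comp (T p) := by
    apply IsLocalization.ringHom_ext (nonZeroDivisors (MvPolynomial (GVar n r) ℚ))
    apply MvPolynomial.ringHom_ext
    · intro a
      show T p (ρ (Qc a)) = q (T p (Qc a))
      rw [hρ0 a, hTQp a, hq0 a]
    · intro v
      cases v with
      | x i =>
        show T p (ρ (Xv i)) = q (T p (Xv i))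
        by_cases hil : i = l
        · rw [hil, hρl, map_mul, map_inv₀, hTS, hTXp l, hq_xpow (fun m => G p m l), Hsum l,
            if_pos rfl, zpow_neg, zpow_one]
        · rw [hρx i hil, hTXp i, hq_xpow (fun m => G p m i), Hsum i, if_neg hil,
            neg_zero, zpow_zero, mul_one]
      | y i =>
        show T p (ρ (Yv i)) = q (T p (Yv i))
        rw [hρy i, hTYp i, hqy i]
      | z i s =>
        show T p (ρ (Zv i s)) = q (T p (Zv i s))
        rw [hρz i s, hTZp i s, hqz i s]
  exact DFunLike.congr_fun main f
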